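/- Let n ≥ 2, let A be a nonsingular n×n 0–1 matrix with A⁻¹ ∈ {−α,α}^{n×n} and |det(A)| = 2^k for some integer k > 0. If A has a minor of order n−1 that is an odd integer, then every minor of A of order n−1 has absolute value 1 and |α| = 1/|det(A)|. -/

import Mathlib

open Matrix Finset

theorem stmt6 {n : ℕ} (hn : 1 ≤ n) (A : Matrix (Fin (n + 1)) (Fin (n + 1)) ℝ)
    (hA : IsUnit A.det)
    (h01 : ∀ i j, A i j = 0 ∨ A i j = 1)
    (α : ℝ) (hequi : ∀ i j, A⁻¹ i j = α ∨ A⁻¹ i j = -α)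
    (k : ℕ) (hk : 0 < k) (hdet : |A.det| = 2 ^ k)
    (hoddminor : ∃ (i j : Fin (n + 1)) (m : ℤ), Odd m ∧
      (A.submatrix i.succAbove j.succAbove).det = (m : ℝ)) :
    (∀ i j : Fin (n + 1), |(A.submatrix i.succAbove j.succAbove).det| = 1) ∧
    |α| = 1 / |A.det| := by
  obtain ⟨i0, j0, m, hm_odd, hm⟩ := hoddminor
  have hdet_ne : A.det ≠ 0 := hA.ne_zero
  -- the integer 0/1 matrix underlying A
  set B : Matrix (Fin (n + 1)) (Fin (n + 1)) ℤ :=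
    fun i j => if A i j = 1 then 1 else 0 with hB
  have hAB : A = B.map (Int.cast : ℤ → ℝ) := by
    ext i j
    rcases h01 i j with h | h <;> simp only [Matrix.map_apply] <;> simp [hB, h]
  -- integer minors
  set M : Fin (n + 1) → Fin (n + 1) → ℤ :=
    fun i j => (B.submatrix i.succAbove j.succAbove).det with hM
  have hminor : ∀ i j, (A.submatrix i.succAbove j.succAbove).det = ((M i j : ℤ) : ℝ) := by
    intro i j
    rw [hAB]
    exact (((Int.castRingHom ℝ).map_det (B.submatrix i.succAbove j.succAbove)).symm : _)
  -- all minors have absolute value |α| * |A.det|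
  have key : ∀ i j : Fin (n + 1), |(A.submatrix i.succAbove j.succAbove).det| = |α| * |A.det| := by
    intro i j
    have h1 : A⁻¹ j i = A.det⁻¹ * Matrix.adjugate A j i := by
      rw [Matrix.inv_def]
      simp [Ring.inverse_eq_inv', Matrix.smul_apply, smul_eq_mul]
    rw [Matrix.adjugate_fin_succ_eq_det_submatrix] at h1
    have habs : |A⁻¹ j i| = |α| := by
      rcases hequi j i with h | h <;> rw [h] <;> simp
    rw [h1] at habs
    rw [abs_mul, abs_mul, abs_inv, abs_pow, abs_neg, abs_one, one_pow, one_mul] at habs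
    have hpos : |A.det| ≠ 0 := by positivity
    field_simp at habs ⊢
    linarith [habs]
  -- hence |M i j| = |m| for all i j
  have habsM : ∀ i j, |((M i j : ℤ) : ℝ)| = |((m : ℤ) : ℝ)| := by
    intro i j
    rw [← hminor, ← hm, hminor i0 j0, ← hminor, key, key]
  have habsMZ : ∀ i j, |M i j| = |m| := by
    intro i j
    have := habsM i j
    rw [← Int.cast_abs, ← Int.cast_abs] at this
    exact_mod_cast this
  -- m divides det B
  have hdvd : ∀ i j, m ∣ M i j := by
    intro i j
    rcases abs_eq_abs.mp (habsMZ i j) with h | h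
    · exact ⟨1, by omega⟩
    · exact ⟨-1, by omega⟩
  have hdetB : A.det = ((B.det : ℤ) : ℝ) := by
    rw [hAB]
    exact (((Int.castRingHom ℝ).map_det B).symm : _)
  have hmdvddet : m ∣ B.det := by
    rw [Matrix.det_succ_row B i0]
    exact Finset.dvd_sum fun j _ => Dvd.dvd.mul_left (hdvd i0 j) _
  -- |det B| = 2 ^ k
  have hdetB2 : |B.det| = 2 ^ k := by
    have : |((B.det : ℤ) : ℝ)| = ((2 : ℤ) ^ k : ℤ) := by
      rw [← hdetB, hdet]; push_cast; ring
    rw [← Int.cast_abs] at this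
    exact_mod_cast this
  have hm2 : m ∣ 2 ^ k := by
    have : m ∣ |B.det| := (dvd_abs m B.det).mpr hmdvddet
    rwa [hdetB2] at this
  -- m odd dividing 2^k forces |m| = 1
  have hm1 : |m| = 1 := by
    have h2 : m.natAbs ∣ 2 ^ k := by
      have h3 := Int.natAbs_dvd_natAbs.mpr hm2
      rwa [show ((2 : ℤ) ^ k).natAbs = 2 ^ k by simp [Int.natAbs_pow]] at h3
    have hodd : Odd m.natAbs := Int.natAbs_odd.mpr hm_odd
    have hcop : Nat.Coprime m.natAbs 2 := hodd.coprime_two_right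
    have h1 : m.natAbs = 1 := Nat.Coprime.eq_one_of_dvd (hcop.pow_right k) h2
    rw [Int.abs_eq_natAbs, h1]
    rfl
  have hmR : |((m : ℤ) : ℝ)| = 1 := by
    rw [← Int.cast_abs, hm1]; norm_num
  -- conclude
  have hkey0 : |α| * |A.det| = 1 := by
    have := key i0 j0
    rw [hm, hmR] at this
    linarith
  constructor
  · intro i j
    rw [key i j, hkey0]
  · have hpos : |A.det| ≠ 0 := by positivity
    field_simp
    linarith [hkey0]
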